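/- Let V: ℝ^m → ℝ be measurable and u_1, ..., u_N ∈ ℝ^m with V(u_i) finite. Define for τ ≥ τ_k the effective sample size ESS_k(τ) = (1/N)·(∑_{i=1}^N exp[(τ−τ_k)V(u_i)])² / ∑_{i=1}^N exp[2(τ−τ_k)V(u_i)]. Then ESS_k(τ_k) = 1, ESS_k(τ) ∈ (0,1] for all τ, and if the values V(u_i) are not all equal then τ ↦ ESS_k(τ) is strictly decreasing on (τ_k, ∞). -/

import Mathlib

open Real

theorem ess_key {N : ℕ} (v : Fin N → ℝ) {t : ℝ} (ht : 0 < t)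
    (hne : ∃ i j, v i ≠ v j) :
    (∑ i, v i * exp (t * v i)) * (∑ i, exp (t * v i) ^ 2)
      < (∑ i, exp (t * v i)) * (∑ i, v i * exp (t * v i) ^ 2) := by
  set w : Fin N → ℝ := fun i => exp (t * v i) with hw
  have hwpos : ∀ i, 0 < w i := fun i => exp_pos _
  have hmono : ∀ i j : Fin N, v i ≤ v j → w i ≤ w j := fun i j h =>
    exp_le_exp.2 (mul_le_mul_of_nonneg_left h ht.le)
  have hmono' : ∀ i j : Fin N, v i < v j → w i < w j := fun i j h =>
    exp_lt_exp.2 (mul_lt_mul_of_pos_left h ht)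
  rw [← sub_pos]
  have hexp : (∑ i, w i) * (∑ i, v i * w i ^ 2) - (∑ i, v i * w i) * (∑ i, w i ^ 2)
      = ∑ i, ∑ j, w i * w j ^ 2 * (v j - v i) := by
    rw [Fintype.sum_mul_sum, Fintype.sum_mul_sum, ← Finset.sum_sub_distrib]
    refine Finset.sum_congr rfl fun i _ => ?_
    rw [← Finset.sum_sub_distrib]
    exact Finset.sum_congr rfl fun j _ => by ring
  rw [hexp]
  have hsym : (2:ℝ) * (∑ i, ∑ j, w i * w j ^ 2 * (v j - v i))
      = ∑ i, ∑ j, (v j - v i) * (w j - w i) * (w i * w j) := by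
    have hswap : (∑ i, ∑ j, w i * w j ^ 2 * (v j - v i))
        = ∑ i, ∑ j, w j * w i ^ 2 * (v i - v j) := Finset.sum_comm
    rw [two_mul]
    nth_rewrite 2 [hswap]
    rw [← Finset.sum_add_distrib]
    refine Finset.sum_congr rfl fun i _ => ?_
    rw [← Finset.sum_add_distrib]
    exact Finset.sum_congr rfl fun j _ => by ring
  have hnn : ∀ i j : Fin N, 0 ≤ (v j - v i) * (w j - w i) * (w i * w j) := by
    intro i j
    refine mul_nonneg ?_ (le_of_lt (mul_pos (hwpos i) (hwpos j)))
    rcases le_total (v i) (v j) with h | h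
    · exact mul_nonneg (by linarith) (by have := hmono i j h; linarith)
    · nlinarith [hmono j i h]
  have hpos : 0 < (2:ℝ) * (∑ i, ∑ j, w i * w j ^ 2 * (v j - v i)) := by
    rw [hsym]
    obtain ⟨i0, j0, hij⟩ := hne
    have hterm : 0 < (v j0 - v i0) * (w j0 - w i0) * (w i0 * w j0) := by
      refine mul_pos ?_ (mul_pos (hwpos i0) (hwpos j0))
      rcases lt_or_gt_of_ne hij with h | h
      · exact mul_pos (by linarith) (by have := hmono' i0 j0 h; linarith)
      · exact mul_pos_of_neg_of_neg (by linarith) (by have := hmono' j0 i0 h; linarith)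
    refine Finset.sum_pos' (fun i _ => Finset.sum_nonneg fun j _ => hnn i j)
      ⟨i0, Finset.mem_univ _, ?_⟩
    exact Finset.sum_pos' (fun j _ => hnn i0 j) ⟨j0, Finset.mem_univ _, hterm⟩
  linarith

/-- basic properties of the effective sample size functional used in
adaptive tempering. -/
theorem stmt15 (m N : ℕ) (hN : 0 < N)
    (V : (Fin m → ℝ) → ℝ) (hVmeas : Measurable V)
    (u : Fin N → (Fin m → ℝ)) (τk : ℝ)
    (ESS : ℝ → ℝ)
    (hESS : ∀ τ, ESS τ =
      (∑ i, Real.exp ((τ - τk) * V (u i))) ^ 2 /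
        (N * ∑ i, Real.exp ((τ - τk) * V (u i)) ^ 2)) :
    ESS τk = 1 ∧
    (∀ τ, 0 < ESS τ ∧ ESS τ ≤ 1) ∧
    ((¬ ∀ i j, V (u i) = V (u j)) → StrictAntiOn ESS (Set.Ioi τk)) := by
  have hNR : (0:ℝ) < N := Nat.cast_pos.2 hN
  haveI : Nonempty (Fin N) := Fin.pos_iff_nonempty.1 hN
  set v : Fin N → ℝ := fun i => V (u i) with hv
  -- positivity of the sums
  have hS1pos : ∀ τ : ℝ, 0 < ∑ i, Real.exp ((τ - τk) * v i) := fun τ =>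
    Finset.sum_pos (fun i _ => exp_pos _) Finset.univ_nonempty
  have hS2pos : ∀ τ : ℝ, 0 < ∑ i, Real.exp ((τ - τk) * v i) ^ 2 := fun τ =>
    Finset.sum_pos (fun i _ => pow_pos (exp_pos _) 2) Finset.univ_nonempty
  have hDen : ∀ τ : ℝ, 0 < (N : ℝ) * ∑ i, Real.exp ((τ - τk) * v i) ^ 2 := fun τ =>
    mul_pos hNR (hS2pos τ)
  refine ⟨?_, ?_, ?_⟩
  · -- ESS τk = 1
    rw [hESS]
    simp [sub_self, Finset.card_univ]
    field_simp
  · -- bounds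
    intro τ
    rw [hESS]
    constructor
    · exact div_pos (pow_pos (hS1pos τ) 2) (hDen τ)
    · rw [div_le_one (hDen τ)]
      have := sq_sum_le_card_mul_sum_sq (s := (Finset.univ : Finset (Fin N)))
        (f := fun i => Real.exp ((τ - τk) * v i))
      simpa [Finset.card_univ] using this
  · -- strict monotonicity
    intro hne
    push_neg at hne
    have hEF : ESS = fun τ =>
        (∑ i, Real.exp ((τ - τk) * v i)) ^ 2 /
          ((N : ℝ) * ∑ i, Real.exp ((τ - τk) * v i) ^ 2) := funext hESS
    rw [hEF]
    -- derivative computations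
    have hS1 : ∀ τ : ℝ, HasDerivAt (fun τ => ∑ i, Real.exp ((τ - τk) * v i))
        (∑ i, v i * Real.exp ((τ - τk) * v i)) τ := by
      intro τ
      refine HasDerivAt.fun_sum fun i _ => ?_
      have h1 : HasDerivAt (fun τ : ℝ => (τ - τk) * v i) (v i) τ := by
        simpa using ((hasDerivAt_id τ).sub_const τk).mul_const (v i)
      simpa [mul_comm] using h1.exp
    have hS2 : ∀ τ : ℝ, HasDerivAt (fun τ => ∑ i, Real.exp ((τ - τk) * v i) ^ 2)
        (∑ i, 2 * v i * Real.exp ((τ - τk) * v i) ^ 2) τ := by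
      intro τ
      refine HasDerivAt.fun_sum fun i _ => ?_
      have h1 : HasDerivAt (fun τ : ℝ => (τ - τk) * v i) (v i) τ := by
        simpa using ((hasDerivAt_id τ).sub_const τk).mul_const (v i)
      have h2 := (h1.exp).fun_pow 2
      exact h2.congr_deriv (by push_cast; ring)
    have hFdiff : ∀ τ : ℝ, HasDerivAt (fun τ =>
        (∑ i, Real.exp ((τ - τk) * v i)) ^ 2 /
          ((N : ℝ) * ∑ i, Real.exp ((τ - τk) * v i) ^ 2))
        (((2 * (∑ i, Real.exp ((τ - τk) * v i)) ^ 1 *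
            (∑ i, v i * Real.exp ((τ - τk) * v i))) *
            ((N : ℝ) * ∑ i, Real.exp ((τ - τk) * v i) ^ 2) -
          (∑ i, Real.exp ((τ - τk) * v i)) ^ 2 *
            ((N : ℝ) * ∑ i, 2 * v i * Real.exp ((τ - τk) * v i) ^ 2)) /
          ((N : ℝ) * ∑ i, Real.exp ((τ - τk) * v i) ^ 2) ^ 2) τ := by
      intro τ
      exact ((hS1 τ).pow 2).div ((hS2 τ).const_mul (N : ℝ)) (hDen τ).ne'
    refine strictAntiOn_of_deriv_neg (convex_Ioi τk)
      (Continuous.continuousOn ?_) ?_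
    · exact (continuous_finset_sum _ fun i _ =>
        (((continuous_id.sub continuous_const).mul continuous_const).rexp)).pow 2
        |>.div
        (continuous_const.mul (continuous_finset_sum _ fun i _ =>
          ((((continuous_id.sub continuous_const).mul continuous_const).rexp).pow 2)))
        (fun τ => (hDen τ).ne')
    · intro τ hτ
      rw [interior_Ioi] at hτ
      rw [(hFdiff τ).deriv]
      have ht : 0 < τ - τk := sub_pos.2 hτ
      have hkey := ess_key v ht hne
      have hnum : (2 * (∑ i, Real.exp ((τ - τk) * v i)) ^ 1 *
            (∑ i, v i * Real.exp ((τ - τk) * v i))) *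
            ((N : ℝ) * ∑ i, Real.exp ((τ - τk) * v i) ^ 2) -
          (∑ i, Real.exp ((τ - τk) * v i)) ^ 2 *
            ((N : ℝ) * ∑ i, 2 * v i * Real.exp ((τ - τk) * v i) ^ 2) < 0 := by
        have hsum2 : (∑ i, 2 * v i * Real.exp ((τ - τk) * v i) ^ 2)
            = 2 * ∑ i, v i * Real.exp ((τ - τk) * v i) ^ 2 := by
          rw [Finset.mul_sum]
          exact Finset.sum_congr rfl fun i _ => by ring
        rw [hsum2]
        have h1 := hS1pos τ
        nlinarith [mul_pos hNR (mul_pos h1 (sub_pos.2 hkey))]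
      exact div_neg_of_neg_of_pos hnum (pow_pos (hDen τ) 2)
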